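/- For every integer m ≥ 0, Q_m(q) = q^{m+1}(Q_{−2−m}(q) + 1), where Q_m(q) is the generating function for partitions with rank ≥ m. -/

import Mathlib

namespace Dyson

/-- The rank of a partition: largest part minus number of parts. -/
def rank {n : ℕ} (π : n.Partition) : ℤ :=
  (π.parts.sup : ℤ) - π.parts.card

/-- The Euler product `(q;q)_∞`. -/
noncomputable def euler (q : ℝ) : ℝ := ∏' j : ℕ, (1 - q ^ (j + 1))

/-- `Q_m(q)`: generating function for nonempty partitions of rank ≥ m. -/
noncomputable def Q (q : ℝ) (m : ℤ) : ℝ :=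
  ∑' n : ℕ, (Nat.card {π : (n + 1).Partition // m ≤ rank π} : ℝ) * q ^ (n + 1)

noncomputable def qPoch (q : ℝ) (n : ℕ) : ℝ := ∏ j ∈ Finset.range n, (1 - q ^ (j + 1))

noncomputable def qbinom (q : ℝ) (a b : ℤ) : ℝ :=
  if 0 ≤ b ∧ b ≤ a then qPoch q a.toNat / (qPoch q b.toNat * qPoch q (a - b).toNat) else 0

noncomputable def QL (q : ℝ) (m L : ℤ) : ℝ :=
  ∑' n : ℕ,
    (Nat.card {π : (n + 1).Partition // m ≤ rank π ∧ (π.parts.sup : ℤ) ≤ L} : ℝ) * q ^ (n + 1)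

def partAt {n : ℕ} (π : n.Partition) (j : ℕ) : ℕ :=
  ((π.parts.sort (· ≤ ·)).reverse.getD j 0)

def inRankSet {n : ℕ} (π : n.Partition) (k : ℤ) : Prop :=
  ∃ j : ℕ, (j : ℤ) - partAt π (j + 1) = k

noncomputable def G (q : ℝ) (k : ℤ) : ℝ :=
  ∑' n : ℕ, (Nat.card {π : n.Partition // inRankSet π k} : ℝ) * q ^ n

def crank {n : ℕ} (π : n.Partition) : ℤ :=
  if π.parts.count 1 = 0 then (π.parts.sup : ℤ)
  else ((π.parts.filter (fun p => π.parts.count 1 < p)).card : ℤ) - π.parts.count 1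


open Multiset

lemma sup_mem {s : Multiset ℕ} (h : s ≠ 0) : s.sup ∈ s := by
  induction s using Multiset.induction with
  | empty => exact absurd rfl h
  | cons a t ih =>
    rw [Multiset.sup_cons]
    rcases eq_or_ne t 0 with rfl | ht
    · simp
    · rcases le_total t.sup a with hle | hle
      · rw [sup_eq_left.2 hle]; exact Multiset.mem_cons_self a t
      · rw [sup_eq_right.2 hle]; exact Multiset.mem_cons_of_mem (ih ht)

/-- Conjugate partition (as a multiset of column sizes). -/
def conj (s : Multiset ℕ) : Multiset ℕ :=
  (Multiset.range s.sup).map fun i => Multiset.countP (fun p => i + 1 ≤ p) s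

@[simp] lemma conj_zero : conj 0 = 0 := rfl

@[simp] lemma card_conj (s : Multiset ℕ) : (conj s).card = s.sup := by simp [conj]

lemma mem_conj_pos {s : Multiset ℕ} {x : ℕ} (hx : x ∈ conj s) : 0 < x := by
  obtain ⟨i, hi, rfl⟩ := Multiset.mem_map.1 hx
  rw [Multiset.mem_range] at hi
  have hs : s ≠ 0 := by
    rintro rfl; simp at hi
  rw [Multiset.countP_pos]
  exact ⟨s.sup, sup_mem hs, hi⟩

lemma mem_conj_le_card {s : Multiset ℕ} {x : ℕ} (hx : x ∈ conj s) : x ≤ s.card := by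
  obtain ⟨i, hi, rfl⟩ := Multiset.mem_map.1 hx
  exact Multiset.countP_le_card _ _

lemma sum_ite_min (a n : ℕ) : (∑ i ∈ Finset.range n, if i + 1 ≤ a then 1 else 0) = min a n := by
  induction n with
  | zero => simp
  | succ n ih => rw [Finset.sum_range_succ, ih]; split <;> omega

lemma sum_range_countP (s : Multiset ℕ) (n : ℕ) :
    (∑ i ∈ Finset.range n, Multiset.countP (fun p => i + 1 ≤ p) s)
      = (s.map fun p => min p n).sum := by
  induction s using Multiset.induction with
  | empty => simp
  | cons a t ih =>
    simp only [Multiset.countP_cons, Finset.sum_add_distrib, ih, Multiset.map_cons,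
      Multiset.sum_cons, sum_ite_min]
    omega

lemma sum_conj (s : Multiset ℕ) : (conj s).sum = s.sum := by
  have h1 : (conj s).sum = ∑ i ∈ Finset.range s.sup, Multiset.countP (fun p => i + 1 ≤ p) s := rfl
  rw [h1, sum_range_countP]
  have : (s.map fun p => min p s.sup) = s.map id :=
    Multiset.map_congr rfl fun x hx => min_eq_left (Multiset.le_sup hx)
  rw [this, Multiset.map_id]

/-- remove the first column -/
def dec (s : Multiset ℕ) : Multiset ℕ := (s.map (· - 1)).filter (0 < ·)

lemma countP_dec (s : Multiset ℕ) (i : ℕ) :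
    Multiset.countP (fun p => i + 1 ≤ p) (dec s) = Multiset.countP (fun p => i + 2 ≤ p) s := by
  rw [dec]
  induction s using Multiset.induction with
  | empty => simp
  | cons a t ih =>
    rw [Multiset.map_cons, Multiset.filter_cons, Multiset.countP_add, ih, Multiset.countP_cons]
    by_cases h : 0 < a - 1
    · rw [if_pos h, show ({a - 1} : Multiset ℕ) = (a - 1) ::ₘ 0 from rfl,
        Multiset.countP_cons, Multiset.countP_zero]
      split_ifs <;> omega
    · simp only [if_neg h, Multiset.countP_zero]
      split_ifs <;> omega

lemma mem_dec {s : Multiset ℕ} {x : ℕ} : x ∈ dec s ↔ 0 < x ∧ ∃ p ∈ s, p - 1 = x := by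
  simp [dec, and_comm]

lemma sup_dec {s : Multiset ℕ} : (dec s).sup = s.sup - 1 := by
  rcases eq_or_ne s 0 with rfl | hs
  · simp [dec]
  apply le_antisymm
  · rw [Multiset.sup_le]
    intro b hb
    obtain ⟨hb0, p, hp, rfl⟩ := mem_dec.1 hb
    have := Multiset.le_sup hp
    omega
  · by_cases h2 : 2 ≤ s.sup
    · have : s.sup - 1 ∈ dec s := mem_dec.2 ⟨by omega, s.sup, sup_mem hs, rfl⟩
      exact Multiset.le_sup this
    · omega

lemma conj_eq_cons {s : Multiset ℕ} (h : s ≠ 0) (h0 : 0 ∉ s) :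
    conj s = s.card ::ₘ conj (dec s) := by
  have hsup : 1 ≤ s.sup := by
    have := sup_mem h
    have := Multiset.le_sup (s := s) this
    rcases Nat.eq_zero_or_pos s.sup with hz | hp
    · exact absurd (hz ▸ sup_mem h) h0
    · exact hp
  obtain ⟨k, hk⟩ : ∃ k, s.sup = 1 + k := ⟨s.sup - 1, by omega⟩
  rw [conj, hk, Multiset.range_add, Multiset.map_add]
  have r1 : (Multiset.range 1).map (fun i => Multiset.countP (fun p => i + 1 ≤ p) s)
      = {s.card} := by
    have : Multiset.countP (fun p => 0 + 1 ≤ p) s = s.card :=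
      Multiset.countP_eq_card.2 fun a ha => by
        have := h0; have : 0 < a := Nat.pos_of_ne_zero (by rintro rfl; exact h0 ha)
        omega
    simp [Multiset.range_succ, this]
    exact this
  rw [r1]
  have r2 : ((Multiset.range k).map (1 + ·)).map (fun i => Multiset.countP (fun p => i + 1 ≤ p) s)
      = conj (dec s) := by
    rw [Multiset.map_map, conj, sup_dec, hk, show 1 + k - 1 = k from by omega]
    apply Multiset.map_congr rfl
    intro i _
    simp only [Function.comp_apply]
    rw [show 1 + i + 1 = i + 2 from by omega]
    exact (countP_dec s i).symm
  rw [r2]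
  rfl

lemma conj_cons {u : Multiset ℕ} {a : ℕ} (ha : u.sup ≤ a) :
    conj (a ::ₘ u) = (conj u).map (· + 1) + Multiset.replicate (a - u.sup) 1 := by
  have hsup : (a ::ₘ u).sup = a := by rw [Multiset.sup_cons, sup_eq_left.2 ha]
  rw [conj, hsup, show Multiset.range a
      = Multiset.range u.sup + (Multiset.range (a - u.sup)).map (u.sup + ·) from by
        rw [← Multiset.range_add]; congr 1; omega,
    Multiset.map_add]
  congr 1
  · rw [conj, Multiset.map_map]
    apply Multiset.map_congr rfl
    intro i hi
    rw [Multiset.mem_range] at hi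
    simp only [Function.comp_apply, Multiset.countP_cons]
    rw [if_pos (by omega)]
  · rw [Multiset.map_map]
    have : ∀ i ∈ Multiset.range (a - u.sup),
        Multiset.countP (fun p => u.sup + i + 1 ≤ p) (a ::ₘ u) = 1 := by
      intro i hi
      rw [Multiset.mem_range] at hi
      rw [Multiset.countP_cons, if_pos (by omega)]
      have hz : Multiset.countP (fun p => u.sup + i + 1 ≤ p) u = 0 :=
        Multiset.countP_eq_zero.2 fun b hb => by
          have := Multiset.le_sup hb; omega
      omega
    rw [show Multiset.map ((fun i => Multiset.countP (fun p => i + 1 ≤ p) (a ::ₘ u))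
        ∘ fun x => u.sup + x) (Multiset.range (a - u.sup))
        = Multiset.map (fun _ => 1) (Multiset.range (a - u.sup)) from
      Multiset.map_congr rfl fun i hi => this i hi]
    simp

lemma conj_conj {s : Multiset ℕ} (h0 : 0 ∉ s) : conj (conj s) = s := by
  induction s using Multiset.strongInductionOn with
  | ih s IH =>
  rcases eq_or_ne s 0 with rfl | hs
  · simp
  have ha : s.sup ∈ s := sup_mem hs
  set a := s.sup with hadef
  set u := s.erase a with hudef
  have hcons : a ::ₘ u = s := Multiset.cons_erase ha
  have h0u : 0 ∉ u := fun h => h0 (Multiset.mem_of_mem_erase h)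
  have hua : u.sup ≤ a := by
    rw [Multiset.sup_le]
    intro b hb
    exact Multiset.le_sup (Multiset.mem_of_mem_erase hb)
  have ha1 : 1 ≤ a := Nat.pos_of_ne_zero (by rintro h; exact h0 (h ▸ ha))
  have hrow : conj s = (conj u).map (· + 1) + Multiset.replicate (a - u.sup) 1 := by
    rw [← hcons] at h0 ⊢
    rw [conj_cons hua]
  set w := (conj u).map (· + 1) + Multiset.replicate (a - u.sup) 1 with hwdef
  have hcardw : w.card = a := by
    simp [hwdef]
    omega
  have hwne : w ≠ 0 := by
    intro h
    rw [h] at hcardw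
    simp at hcardw
    omega
  have h0w : 0 ∉ w := by
    intro h
    rcases Multiset.mem_add.1 h with h | h
    · obtain ⟨x, _, hx⟩ := Multiset.mem_map.1 h
      omega
    · have := Multiset.eq_of_mem_replicate h
      omega
  have hdecw : dec w = conj u := by
    rw [hwdef, dec, Multiset.map_add, Multiset.filter_add, Multiset.map_map]
    have e1 : ((conj u).map ((· - 1) ∘ (· + 1))).filter (0 < ·) = conj u := by
      rw [show ((· - 1) ∘ (· + 1) : ℕ → ℕ) = id from by funext x; simp]
      rw [Multiset.map_id]
      exact Multiset.filter_eq_self.2 fun x hx => mem_conj_pos hx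
    have e2 : ((Multiset.replicate (a - u.sup) 1).map (· - 1)).filter (0 < ·) = 0 := by
      rw [Multiset.map_replicate]
      apply Multiset.eq_zero_of_forall_notMem
      intro x hx
      rw [Multiset.mem_filter] at hx
      have := Multiset.eq_of_mem_replicate hx.1
      omega
    rw [e1, e2, add_zero]
  rw [hrow, conj_eq_cons hwne h0w, hdecw, hcardw,
    IH u (by rw [← hcons]; exact Multiset.lt_cons_self u a) h0u, hcons]

lemma sup_conj {s : Multiset ℕ} (h0 : 0 ∉ s) : (conj s).sup = s.card := by
  rcases eq_or_ne s 0 with rfl | hs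
  · simp
  rw [conj_eq_cons hs h0, Multiset.sup_cons]
  apply sup_eq_left.2
  rw [Multiset.sup_le]
  intro b hb
  have h1 : b ≤ (dec s).card := mem_conj_le_card hb
  have h2 : (dec s).card ≤ s.card := by
    rw [dec]
    exact le_trans (Multiset.card_le_card (Multiset.filter_le _ _))
      (le_of_eq (Multiset.card_map _ _))
  omega

lemma parts_ne_zero {N : ℕ} (hN : 1 ≤ N) (π : N.Partition) : π.parts ≠ 0 := by
  intro h
  have := π.parts_sum
  rw [h] at this
  simp at this
  omega

lemma sup_le_card_mul {N : ℕ} (π : N.Partition) : π.parts.sup ≤ N := by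
  rcases eq_or_ne π.parts 0 with h | h
  · rw [h]; simp
  · exact le_trans (Multiset.le_sup (sup_mem h))
      (le_of_le_of_eq (Multiset.le_sum_of_mem (sup_mem h)) π.parts_sum)

lemma card_le_sum_of_pos {s : Multiset ℕ} (h : ∀ x ∈ s, 0 < x) : s.card ≤ s.sum := by
  induction s using Multiset.induction with
  | empty => simp
  | cons a t ih =>
    rw [Multiset.card_cons, Multiset.sum_cons]
    have h1 := h a (Multiset.mem_cons_self a t)
    have h2 := ih fun x hx => h x (Multiset.mem_cons_of_mem hx)
    omega

lemma dyson_core {s : Multiset ℕ} (hpos : ∀ x ∈ s, 0 < x) (hs : s ≠ 0)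
    (c : ℕ) (hc1 : 1 ≤ c) (hc : s.card - 1 ≤ c) :
    (∀ x ∈ c ::ₘ conj (s.erase s.sup), 0 < x)
    ∧ (c ::ₘ conj (s.erase s.sup)).sum = c + (s.sum - s.sup)
    ∧ (c ::ₘ conj (s.erase s.sup)).sup = c
    ∧ (c ::ₘ conj (s.erase s.sup)).card = (s.erase s.sup).sup + 1
    ∧ (s.erase s.sup).sup ≤ s.sup := by
  have ha : s.sup ∈ s := sup_mem hs
  set t := s.erase s.sup with htdef
  have hcons : s.sup ::ₘ t = s := Multiset.cons_erase ha
  have hcard : t.card = s.card - 1 := Multiset.card_erase_of_mem ha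
  have hsum : s.sup + t.sum = s.sum := by
    have := congrArg Multiset.sum hcons
    rwa [Multiset.sum_cons] at this
  refine ⟨?_, ?_, ?_, ?_, ?_⟩
  · intro x hx
    rcases Multiset.mem_cons.1 hx with rfl | hx
    · exact hc1
    · exact mem_conj_pos hx
  · rw [Multiset.sum_cons, sum_conj]; omega
  · rw [Multiset.sup_cons]
    apply sup_eq_left.2
    rw [Multiset.sup_le]
    intro b hb
    have := mem_conj_le_card hb
    omega
  · rw [Multiset.card_cons, card_conj]
  · rw [Multiset.sup_le]
    intro b hb
    exact Multiset.le_sup (Multiset.mem_of_mem_erase hb)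

lemma fwd_facts (m k : ℕ) (hk : 1 ≤ k) (π : (k + m + 1).Partition)
    (hπ : (m : ℤ) ≤ rank π) :
    m + 2 ≤ π.parts.sup ∧ π.parts.card + m ≤ π.parts.sup ∧ π.parts.sup ≤ k + m + 1 := by
  have hs : π.parts ≠ 0 := parts_ne_zero (by omega) π
  have hsum : π.parts.sum = k + m + 1 := π.parts_sum
  have hcardpos : 0 < π.parts.card := Multiset.card_pos.2 hs
  have hr : π.parts.card + m ≤ π.parts.sup := by
    rw [rank] at hπ; omega
  have hle : π.parts.sup ≤ k + m + 1 :=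
    le_of_le_of_eq (Multiset.le_sum_of_mem (sup_mem hs)) hsum
  refine ⟨?_, hr, hle⟩
  by_cases h1 : π.parts.card = 1
  · obtain ⟨x, hx⟩ := Multiset.card_eq_one.1 h1
    have : π.parts.sup = x := by rw [hx]; simp
    have : π.parts.sum = x := by rw [hx]; simp
    omega
  · omega

lemma bwd_facts (m k : ℕ) (hk : 1 ≤ k) (π : k.Partition)
    (hπ : -2 - (m : ℤ) ≤ rank π) :
    1 ≤ π.parts.sup ∧ π.parts.card ≤ π.parts.sup + m + 2 ∧ π.parts.sup ≤ k := by
  have hs : π.parts ≠ 0 := parts_ne_zero hk π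
  have hsum : π.parts.sum = k := π.parts_sum
  have hr : π.parts.card ≤ π.parts.sup + m + 2 := by
    rw [rank] at hπ; omega
  have hle : π.parts.sup ≤ k :=
    le_of_le_of_eq (Multiset.le_sum_of_mem (sup_mem hs)) hsum
  exact ⟨π.parts_pos (sup_mem hs), hr, hle⟩

def dysonFwd (m k : ℕ) (hk : 1 ≤ k) (x : {π : (k + m + 1).Partition // (m : ℤ) ≤ rank π}) :
    {π : k.Partition // -2 - (m : ℤ) ≤ rank π} :=
  ⟨⟨(x.1.parts.sup - (m + 1)) ::ₘ conj (x.1.parts.erase x.1.parts.sup),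
    fun {i} hi => by
      obtain ⟨f1, f2, f3⟩ := fwd_facts m k hk x.1 x.2
      exact (dyson_core (fun y hy => x.1.parts_pos hy) (parts_ne_zero (by omega) x.1)
        _ (by omega) (by omega)).1 i hi,
    by
      obtain ⟨f1, f2, f3⟩ := fwd_facts m k hk x.1 x.2
      have hsum : x.1.parts.sum = k + m + 1 := x.1.parts_sum
      rw [(dyson_core (fun y hy => x.1.parts_pos hy) (parts_ne_zero (by omega) x.1)
        _ (by omega) (by omega)).2.1]
      omega⟩,
    by
      obtain ⟨f1, f2, f3⟩ := fwd_facts m k hk x.1 x.2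
      obtain ⟨-, -, c3, c4, c5⟩ := dyson_core (fun y hy => x.1.parts_pos hy)
        (parts_ne_zero (by omega) x.1) (x.1.parts.sup - (m + 1)) (by omega) (by omega)
      show -2 - (m : ℤ)
          ≤ ((((x.1.parts.sup - (m + 1)) ::ₘ conj (x.1.parts.erase x.1.parts.sup)).sup : ℤ)
            - (((x.1.parts.sup - (m + 1)) ::ₘ conj (x.1.parts.erase x.1.parts.sup)).card : ℤ))
      rw [c3, c4]
      omega⟩

def dysonBwd (m k : ℕ) (hk : 1 ≤ k) (x : {π : k.Partition // -2 - (m : ℤ) ≤ rank π}) :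
    {π : (k + m + 1).Partition // (m : ℤ) ≤ rank π} :=
  ⟨⟨(x.1.parts.sup + (m + 1)) ::ₘ conj (x.1.parts.erase x.1.parts.sup),
    fun {i} hi => by
      obtain ⟨f1, f2, f3⟩ := bwd_facts m k hk x.1 x.2
      exact (dyson_core (fun y hy => x.1.parts_pos hy) (parts_ne_zero hk x.1)
        _ (by omega) (by omega)).1 i hi,
    by
      obtain ⟨f1, f2, f3⟩ := bwd_facts m k hk x.1 x.2
      have hsum : x.1.parts.sum = k := x.1.parts_sum
      rw [(dyson_core (fun y hy => x.1.parts_pos hy) (parts_ne_zero hk x.1)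
        _ (by omega) (by omega)).2.1]
      omega⟩,
    by
      obtain ⟨f1, f2, f3⟩ := bwd_facts m k hk x.1 x.2
      obtain ⟨-, -, c3, c4, c5⟩ := dyson_core (fun y hy => x.1.parts_pos hy)
        (parts_ne_zero hk x.1) (x.1.parts.sup + (m + 1)) (by omega) (by omega)
      show (m : ℤ)
          ≤ ((((x.1.parts.sup + (m + 1)) ::ₘ conj (x.1.parts.erase x.1.parts.sup)).sup : ℤ)
            - (((x.1.parts.sup + (m + 1)) ::ₘ conj (x.1.parts.erase x.1.parts.sup)).card : ℤ))
      rw [c3, c4]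
      omega⟩

def dysonEquiv (m k : ℕ) (hk : 1 ≤ k) :
    {π : (k + m + 1).Partition // (m : ℤ) ≤ rank π}
      ≃ {π : k.Partition // -2 - (m : ℤ) ≤ rank π} where
  toFun := dysonFwd m k hk
  invFun := dysonBwd m k hk
  left_inv x := by
    apply Subtype.ext
    apply Nat.Partition.ext
    obtain ⟨f1, f2, f3⟩ := fwd_facts m k hk x.1 x.2
    have hs : x.1.parts ≠ 0 := parts_ne_zero (by omega) x.1
    have h0t : 0 ∉ x.1.parts.erase x.1.parts.sup := fun h =>
      by exact absurd (x.1.parts_pos (Multiset.mem_of_mem_erase h)) (by omega)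
    obtain ⟨-, -, c3, -, -⟩ := dyson_core (fun y hy => x.1.parts_pos hy) hs
      (x.1.parts.sup - (m + 1)) (by omega) (by omega)
    show ((dysonFwd m k hk x).1.parts.sup + (m + 1)) ::ₘ
        conj ((dysonFwd m k hk x).1.parts.erase (dysonFwd m k hk x).1.parts.sup)
        = x.1.parts
    have hp : (dysonFwd m k hk x).1.parts
        = (x.1.parts.sup - (m + 1)) ::ₘ conj (x.1.parts.erase x.1.parts.sup) := rfl
    rw [hp, c3, Multiset.erase_cons_head, conj_conj h0t,
      show x.1.parts.sup - (m + 1) + (m + 1) = x.1.parts.sup from by omega,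
      Multiset.cons_erase (sup_mem hs)]
  right_inv x := by
    apply Subtype.ext
    apply Nat.Partition.ext
    obtain ⟨f1, f2, f3⟩ := bwd_facts m k hk x.1 x.2
    have hs : x.1.parts ≠ 0 := parts_ne_zero hk x.1
    have h0t : 0 ∉ x.1.parts.erase x.1.parts.sup := fun h =>
      by exact absurd (x.1.parts_pos (Multiset.mem_of_mem_erase h)) (by omega)
    obtain ⟨-, -, c3, -, -⟩ := dyson_core (fun y hy => x.1.parts_pos hy) hs
      (x.1.parts.sup + (m + 1)) (by omega) (by omega)
    show ((dysonBwd m k hk x).1.parts.sup - (m + 1)) ::ₘ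
        conj ((dysonBwd m k hk x).1.parts.erase (dysonBwd m k hk x).1.parts.sup)
        = x.1.parts
    have hp : (dysonBwd m k hk x).1.parts
        = (x.1.parts.sup + (m + 1)) ::ₘ conj (x.1.parts.erase x.1.parts.sup) := rfl
    rw [hp, c3, Multiset.erase_cons_head, conj_conj h0t, Nat.add_sub_cancel,
      Multiset.cons_erase (sup_mem hs)]

lemma card_eq_zero_of_lt (m n : ℕ) (h : n < m) :
    Nat.card {π : (n + 1).Partition // (m : ℤ) ≤ rank π} = 0 := by
  have : IsEmpty {π : (n + 1).Partition // (m : ℤ) ≤ rank π} := by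
    constructor
    rintro ⟨π, hπ⟩
    have h1 : π.parts.sup ≤ n + 1 := sup_le_card_mul π
    have h2 : 0 < π.parts.card := Multiset.card_pos.2 (parts_ne_zero (by omega) π)
    rw [rank] at hπ
    omega
  exact Nat.card_of_isEmpty

lemma parts_eq_of_rank {m : ℕ} (π : (m + 1).Partition) (hπ : (m : ℤ) ≤ rank π) :
    π.parts = {m + 1} := by
  have h1 : π.parts.sup ≤ m + 1 := sup_le_card_mul π
  have h2 : 0 < π.parts.card := Multiset.card_pos.2 (parts_ne_zero (by omega) π)
  rw [rank] at hπ
  have h3 : π.parts.card = 1 := by omega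
  obtain ⟨x, hx⟩ := Multiset.card_eq_one.1 h3
  have h4 : π.parts.sum = x := by rw [hx]; simp
  have h5 := π.parts_sum
  rw [hx]
  congr 1
  omega

lemma card_eq_one_at (m : ℕ) :
    Nat.card {π : (m + 1).Partition // (m : ℤ) ≤ rank π} = 1 := by
  rw [Nat.card_eq_one_iff_unique]
  constructor
  · constructor
    rintro ⟨π, hπ⟩ ⟨ρ, hρ⟩
    apply Subtype.ext
    apply Nat.Partition.ext
    rw [parts_eq_of_rank π hπ, parts_eq_of_rank ρ hρ]
  · refine ⟨⟨Nat.Partition.indiscrete (m + 1), ?_⟩⟩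
    rw [rank, Nat.Partition.indiscrete_parts (by omega)]
    simp

lemma card_shift (m k N : ℕ) (hk : 1 ≤ k) (hN : N = k + m + 1) :
    Nat.card {π : N.Partition // (m : ℤ) ≤ rank π}
      = Nat.card {π : k.Partition // -2 - (m : ℤ) ≤ rank π} := by
  subst hN
  exact Nat.card_congr (dysonEquiv m k hk)

/- ### Counting bound -/

lemma sum_finset_pos (F : Finset ℕ) (hF : 0 ∉ F) : F.card * (F.card + 1) ≤ 2 * (F.sum id) := by
  classical
  induction F using Finset.strongInduction with
  | _ F IH =>
    rcases F.eq_empty_or_nonempty with rfl | hne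
    · simp
    · have hFne := hne
      set M := F.max' hne with hM
      have hMF : M ∈ F := F.max'_mem hne
      have hcard : F.card ≤ M := by
        have hsub : F ⊆ Finset.Icc 1 M := by
          intro x hx
          rw [Finset.mem_Icc]
          exact ⟨Nat.pos_of_ne_zero (by rintro rfl; exact hF hx), F.le_max' x hx⟩
        calc F.card ≤ (Finset.Icc 1 M).card := Finset.card_le_card hsub
        _ = M := by rw [Nat.card_Icc]; omega
      have hIH := IH (F.erase M) (Finset.erase_ssubset hMF)
        (fun h => hF (Finset.mem_of_mem_erase h))
      have hsum : M + (F.erase M).sum id = F.sum id := Finset.add_sum_erase F id hMF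
      have hcard' : (F.erase M).card = F.card - 1 := Finset.card_erase_of_mem hMF
      have hpos : 0 < F.card := Finset.card_pos.2 hne
      rw [hcard'] at hIH
      obtain ⟨d, hd⟩ : ∃ d, F.card = d + 1 := ⟨F.card - 1, by omega⟩
      rw [hd] at hIH hcard ⊢
      simp only [Nat.add_sub_cancel] at hIH
      nlinarith

lemma toFinset_card_le {N : ℕ} (π : N.Partition) :
    π.parts.toFinset.card ≤ Nat.sqrt (2 * N) + 1 := by
  have h0 : 0 ∉ π.parts.toFinset := fun h =>
    absurd (π.parts_pos (Multiset.mem_toFinset.1 h)) (by omega)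
  have hsum : π.parts.toFinset.sum id ≤ N := by
    have hle : π.parts.dedup ≤ π.parts := Multiset.dedup_le _
    have e1 : π.parts.toFinset.sum id = π.parts.dedup.sum := by
      rw [Finset.sum]
      simp [Multiset.toFinset]
    have e2 : π.parts.dedup.sum ≤ π.parts.sum := by
      obtain ⟨u, hu⟩ := Multiset.le_iff_exists_add.1 hle
      have := congrArg Multiset.sum hu
      rw [Multiset.sum_add] at this
      omega
    have e3 := π.parts_sum
    omega
  have hkey := sum_finset_pos π.parts.toFinset h0
  have h2 : π.parts.toFinset.card * π.parts.toFinset.card ≤ 2 * N := by nlinarith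
  have := Nat.le_sqrt.2 h2
  omega

/-- the sorted list of distinct parts -/
def dlist {N : ℕ} (π : N.Partition) : List ℕ := π.parts.toFinset.sort (· ≤ ·)

lemma dlist_getD_le {N : ℕ} (π : N.Partition) (j : ℕ) : (dlist π).getD j 0 ≤ N := by
  rcases lt_or_ge j (dlist π).length with h | h
  · rw [List.getD_eq_getElem _ _ h]
    have hmem : (dlist π)[j] ∈ dlist π := List.getElem_mem _
    have : (dlist π)[j] ∈ π.parts := by
      have := (Finset.mem_sort (α := ℕ) (· ≤ ·)).1 hmem
      exact Multiset.mem_toFinset.1 this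
    exact le_of_le_of_eq (Multiset.le_sum_of_mem this) π.parts_sum
  · rw [List.getD_eq_default _ _ h]
    omega

lemma count_le_of_mem_parts {N : ℕ} (π : N.Partition) (k : ℕ) : π.parts.count k ≤ N :=
  le_trans (Multiset.count_le_card _ _) (le_of_le_of_eq (card_le_sum_of_pos
    fun x hx => π.parts_pos hx) π.parts_sum)

lemma dlist_length_le {N : ℕ} (π : N.Partition) :
    (dlist π).length ≤ Nat.sqrt (2 * N) + 1 := by
  rw [dlist, Finset.length_sort]
  exact toFinset_card_le π

lemma count_eq_of_encode {N : ℕ} (π ρ : N.Partition)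
    (h : ∀ j : ℕ, ((dlist π).getD j 0, π.parts.count ((dlist π).getD j 0))
      = ((dlist ρ).getD j 0, ρ.parts.count ((dlist ρ).getD j 0)))
    (k : ℕ) (hk : k ∈ π.parts.toFinset) : π.parts.count k = ρ.parts.count k := by
  have hkL : k ∈ dlist π := (Finset.mem_sort (α := ℕ) (· ≤ ·)).2 hk
  have hj : (dlist π).idxOf k < (dlist π).length := List.idxOf_lt_length_iff.2 hkL
  have hget : (dlist π).getD ((dlist π).idxOf k) 0 = k := by
    rw [List.getD_eq_getElem _ _ hj]
    exact List.getElem_idxOf hj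
  have h1 := h ((dlist π).idxOf k)
  rw [hget] at h1
  have h2 := congrArg Prod.fst h1
  have h3 := congrArg Prod.snd h1
  simp only at h2 h3
  rw [← h2] at h3
  exact h3

lemma partition_card_le (N : ℕ) :
    Fintype.card (Nat.Partition N) ≤ ((N + 1) * (N + 1)) ^ (Nat.sqrt (2 * N) + 1) := by
  classical
  set s := Nat.sqrt (2 * N) + 1 with hs
  have hmain : Fintype.card (Nat.Partition N)
      ≤ Fintype.card (Fin s → Fin (N + 1) × Fin (N + 1)) := by
    apply Fintype.card_le_of_injective
      (fun π j => (⟨(dlist π).getD j 0, by have := dlist_getD_le π j; omega⟩,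
        ⟨π.parts.count ((dlist π).getD j 0), by
          have := count_le_of_mem_parts π ((dlist π).getD j 0); omega⟩))
    intro π ρ hfun
    have hE : ∀ j : ℕ, ((dlist π).getD j 0, π.parts.count ((dlist π).getD j 0))
        = ((dlist ρ).getD j 0, ρ.parts.count ((dlist ρ).getD j 0)) := by
      intro j
      rcases lt_or_ge j s with hj | hj
      · have := congrFun hfun ⟨j, hj⟩
        obtain ⟨ha, hb⟩ := Prod.ext_iff.1 this
        have ha' := congrArg Fin.val ha
        have hb' := congrArg Fin.val hb
        simp only at ha' hb'
        exact Prod.ext ha' hb'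
      · have l1 : (dlist π).length ≤ j := le_trans (dlist_length_le π) hj
        have l2 : (dlist ρ).length ≤ j := le_trans (dlist_length_le ρ) hj
        rw [List.getD_eq_default _ _ l1, List.getD_eq_default _ _ l2]
        have c1 : π.parts.count 0 = 0 :=
          Multiset.count_eq_zero_of_notMem fun h => absurd (π.parts_pos h) (by omega)
        have c2 : ρ.parts.count 0 = 0 :=
          Multiset.count_eq_zero_of_notMem fun h => absurd (ρ.parts_pos h) (by omega)
        rw [c1, c2]
    apply Nat.Partition.ext
    ext k
    by_cases hk : k ∈ π.parts.toFinset
    · exact count_eq_of_encode π ρ hE k hk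
    · by_cases hk' : k ∈ ρ.parts.toFinset
      · exact (count_eq_of_encode ρ π (fun j => (hE j).symm) k hk').symm
      · rw [Multiset.count_eq_zero_of_notMem fun h => hk (Multiset.mem_toFinset.2 h),
          Multiset.count_eq_zero_of_notMem fun h => hk' (Multiset.mem_toFinset.2 h)]
  calc Fintype.card (Nat.Partition N) ≤ _ := hmain
  _ = ((N + 1) * (N + 1)) ^ s := by
      rw [Fintype.card_fun]
      simp

open Filter in
lemma tendsto_exponent_div :
    Tendsto (fun n : ℕ => (2 * (Nat.sqrt (2 * n) + 1) : ℝ) * Real.log (n + 1) / n)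
      atTop (nhds 0) := by
  have hlog : Tendsto (fun n : ℕ => Real.log (n + 1) / Real.sqrt (n + 1)) atTop (nhds 0) := by
    have h1 : Tendsto (fun x : ℝ => Real.log x / x ^ (1/2 : ℝ)) atTop (nhds 0) :=
      (isLittleO_log_rpow_atTop (by norm_num : (0:ℝ) < 1/2)).tendsto_div_nhds_zero
    have h2 : Tendsto (fun n : ℕ => ((n : ℝ) + 1)) atTop atTop :=
      tendsto_atTop_add_const_right _ _ tendsto_natCast_atTop_atTop
    have h3 := h1.comp h2
    apply h3.congr
    intro n
    simp only [Function.comp_apply]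
    rw [Real.sqrt_eq_rpow]
  apply squeeze_zero' (f := fun n : ℕ => (2 * (Nat.sqrt (2 * n) + 1) : ℝ) * Real.log (n + 1) / n)
    (g := fun n : ℕ => 12 * (Real.log (n + 1) / Real.sqrt (n + 1))) ?_ ?_ ?_
  · filter_upwards [eventually_ge_atTop 1] with n hn
    have : (0:ℝ) ≤ Real.log (n + 1) := Real.log_nonneg (by push_cast; linarith)
    positivity
  · filter_upwards [eventually_ge_atTop 1] with n hn
    have hn1 : (1:ℝ) ≤ (n:ℝ) := by exact_mod_cast hn
    have hsq : (0:ℝ) < Real.sqrt ((n:ℝ) + 1) := Real.sqrt_pos.2 (by linarith)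
    have hlog0 : (0:ℝ) ≤ Real.log ((n:ℝ) + 1) := Real.log_nonneg (by linarith)
    -- bound the exponent by 6 * sqrt (n+1)
    have hb : (2 * (Nat.sqrt (2 * n) + 1) : ℝ) ≤ 6 * Real.sqrt ((n:ℝ) + 1) := by
      have e1 : ((Nat.sqrt (2 * n) : ℝ)) ≤ Real.sqrt (2 * (n:ℝ)) := by
        rw [show ((Nat.sqrt (2 * n) : ℝ)) = Real.sqrt ((Nat.sqrt (2 * n) : ℝ) ^ 2) from
          (Real.sqrt_sq (by positivity)).symm]
        apply Real.sqrt_le_sqrt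
        have := Nat.sqrt_le' (2 * n)
        exact_mod_cast this
      have e2 : Real.sqrt (2 * (n:ℝ)) ≤ Real.sqrt (4 * ((n:ℝ) + 1)) :=
        Real.sqrt_le_sqrt (by linarith)
      have e3 : Real.sqrt (4 * ((n:ℝ) + 1)) = 2 * Real.sqrt ((n:ℝ) + 1) := by
        rw [show (4 : ℝ) * ((n:ℝ)+1) = (2 * Real.sqrt ((n:ℝ)+1)) ^ 2 from by
          rw [mul_pow]
          rw [Real.sq_sqrt (by linarith)]
          ring]
        exact Real.sqrt_sq (by positivity)
      have e4 : (1:ℝ) ≤ Real.sqrt ((n:ℝ) + 1) := by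
        have := Real.sqrt_le_sqrt (show (1:ℝ) ≤ (n:ℝ) + 1 by linarith)
        rwa [Real.sqrt_one] at this
      push_cast
      nlinarith
    have hn2 : ((n:ℝ) + 1) / 2 ≤ (n:ℝ) := by linarith
    calc (2 * (Nat.sqrt (2 * n) + 1) : ℝ) * Real.log (n + 1) / n
        ≤ 6 * Real.sqrt ((n:ℝ) + 1) * Real.log ((n:ℝ) + 1) / (((n:ℝ) + 1) / 2) := by
          apply div_le_div₀ (by positivity) (by nlinarith) (by linarith) hn2
      _ = 12 * (Real.sqrt ((n:ℝ)+1) / ((n:ℝ)+1)) * Real.log ((n:ℝ)+1) := by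
          field_simp
          ring
      _ = 12 * (Real.log ((n:ℝ) + 1) / Real.sqrt ((n:ℝ)+1)) := by
          rw [Real.sqrt_div_self']
          field_simp
  · have := hlog.const_mul (12:ℝ)
    simpa using this

open Filter in
lemma summable_A {t : ℝ} (h0 : 0 < t) (h1 : t < 1) :
    Summable (fun n : ℕ =>
      (((((n+1) * (n+1)) ^ (Nat.sqrt (2 * n) + 1) : ℕ)) : ℝ) * t ^ n) := by
  set r := (1 + t) / 2 with hr
  have hr0 : 0 ≤ r := by rw [hr]; linarith
  have hr1 : r < 1 := by rw [hr]; linarith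
  have hc1 : 1 < r / t := by rw [lt_div_iff₀ h0]; rw [hr]; linarith
  have hlogc : 0 < Real.log (r / t) := Real.log_pos hc1
  have hev : ∀ᶠ n : ℕ in atTop,
      (((((n+1) * (n+1)) ^ (Nat.sqrt (2 * n) + 1) : ℕ)) : ℝ) ≤ (r / t) ^ n := by
    have h2 := (tendsto_exponent_div.eventually_lt_const hlogc)
    filter_upwards [h2, eventually_ge_atTop 1] with n hn hn1
    have hA : (((((n+1) * (n+1)) ^ (Nat.sqrt (2 * n) + 1) : ℕ)) : ℝ)
        = ((n:ℝ) + 1) ^ (2 * (Nat.sqrt (2 * n) + 1)) := by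
      push_cast
      rw [pow_mul]
      ring_nf
    rw [hA]
    have hpos : (0:ℝ) < (n:ℝ) + 1 := by positivity
    have hL : (2 * (Nat.sqrt (2 * n) + 1) : ℝ) * Real.log ((n:ℝ) + 1)
        ≤ (n:ℝ) * Real.log (r / t) := by
      have hnpos : (0:ℝ) < (n:ℝ) := by exact_mod_cast hn1
      rw [div_lt_iff₀ hnpos] at hn
      linarith
    have hc0 : (0:ℝ) < r / t := by linarith
    calc ((n:ℝ) + 1) ^ (2 * (Nat.sqrt (2 * n) + 1))
        = Real.exp (Real.log (((n:ℝ) + 1) ^ (2 * (Nat.sqrt (2 * n) + 1)))) :=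
          (Real.exp_log (by positivity)).symm
      _ ≤ Real.exp (Real.log ((r / t) ^ n)) := by
          apply Real.exp_le_exp.2
          rw [Real.log_pow, Real.log_pow]
          push_cast
          push_cast at hL
          linarith
      _ = (r / t) ^ n := Real.exp_log (by positivity)
  apply summable_of_isBigO_nat (summable_geometric_of_lt_one hr0 hr1)
  rw [Asymptotics.isBigO_iff]
  refine ⟨1, ?_⟩
  filter_upwards [hev] with n hn
  rw [Real.norm_eq_abs, Real.norm_eq_abs, one_mul]
  rw [abs_of_nonneg (by positivity), abs_of_nonneg (by positivity)]
  calc (((((n+1) * (n+1)) ^ (Nat.sqrt (2 * n) + 1) : ℕ)) : ℝ) * t ^ n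
      ≤ (r / t) ^ n * t ^ n := mul_le_mul_of_nonneg_right hn (by positivity)
    _ = r ^ n := by
        rw [← mul_pow]
        congr 1
        field_simp

lemma summable_coeff (q : ℝ) (hq0 : q ≠ 0) (hq : |q| < 1) (c : ℕ → ℕ)
    (hc : ∀ n, c n ≤ Fintype.card (Nat.Partition (n + 1))) :
    Summable fun n : ℕ => (c n : ℝ) * q ^ (n + 1) := by
  have ht0 : 0 < |q| := abs_pos.2 hq0
  have hA := summable_A ht0 hq
  have hshift : Summable (fun n : ℕ =>
      (((((n+1)+1) * ((n+1)+1)) ^ (Nat.sqrt (2 * (n+1)) + 1) : ℕ) : ℝ) * |q| ^ (n+1)) :=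
    (summable_nat_add_iff 1).2 hA
  apply Summable.of_norm
  apply Summable.of_nonneg_of_le (fun n => norm_nonneg _) ?_ hshift
  intro n
  rw [norm_mul, norm_pow, Real.norm_eq_abs, Real.norm_eq_abs, Nat.abs_cast]
  apply mul_le_mul_of_nonneg_right ?_ (by positivity)
  have h1 : c n ≤ ((n+1+1) * (n+1+1)) ^ (Nat.sqrt (2 * (n+1)) + 1) :=
    le_trans (hc n) (partition_card_le (n+1))
  exact_mod_cast h1

lemma nat_card_subtype_le (N : ℕ) (p : (Nat.Partition N) → Prop) :
    Nat.card {π : Nat.Partition N // p π} ≤ Fintype.card (Nat.Partition N) := by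
  rw [← Nat.card_eq_fintype_card]
  exact Nat.card_le_card_of_injective Subtype.val Subtype.val_injective

/-- for m ≥ 0, `Q_m(q) = q^{m+1}(Q_{-2-m}(q) + 1)`. -/
theorem stmt1 (q : ℝ) (hq : |q| < 1) (m : ℕ) :
    Q q m = q ^ (m + 1) * (Q q (-2 - m) + 1) := by
  by_cases hq0 : q = 0
  · subst hq0
    rw [Q, Q]
    have hz : ∀ n : ℕ, (0:ℝ) ^ (n + 1) = 0 := fun n => zero_pow (Nat.succ_ne_zero n)
    rw [tsum_congr (fun n => by rw [hz n, mul_zero]), tsum_zero,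
      tsum_congr (fun n => by rw [hz n, mul_zero]), tsum_zero, hz m, zero_mul]
  have hfs : Summable (fun n : ℕ =>
      (Nat.card {π : (n + 1).Partition // (m : ℤ) ≤ rank π} : ℝ) * q ^ (n + 1)) :=
    summable_coeff q hq0 hq _ (fun n => nat_card_subtype_le (n+1) _)
  have hgs : Summable (fun n : ℕ =>
      (Nat.card {π : (n + 1).Partition // -2 - (m : ℤ) ≤ rank π} : ℝ) * q ^ (n + 1)) :=
    summable_coeff q hq0 hq _ (fun n => nat_card_subtype_le (n+1) _)
  have key := (Summable.sum_add_tsum_nat_add (m + 1) hfs).symm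
  have hsum1 : (∑ i ∈ Finset.range (m + 1),
      (Nat.card {π : (i + 1).Partition // (m : ℤ) ≤ rank π} : ℝ) * q ^ (i + 1))
      = q ^ (m + 1) := by
    rw [Finset.sum_eq_single_of_mem m (Finset.self_mem_range_succ m)]
    · rw [card_eq_one_at m]
      simp
    · intro i _ hi
      have hi' : i < m := by
        rcases Finset.mem_range.1 ‹i ∈ Finset.range (m+1)› with h
        omega
      rw [card_eq_zero_of_lt m i hi']
      simp
  have hsum2 : (∑' n : ℕ,
      (Nat.card {π : ((n + (m + 1)) + 1).Partition // (m : ℤ) ≤ rank π} : ℝ) * q ^ ((n + (m+1)) + 1))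
      = q ^ (m + 1) * Q q (-2 - m) := by
    rw [show Q q (-2 - m) = ∑' n : ℕ,
        (Nat.card {π : (n + 1).Partition // -2 - (m : ℤ) ≤ rank π} : ℝ) * q ^ (n + 1) from rfl]
    rw [← tsum_mul_left]
    apply tsum_congr
    intro n
    rw [card_shift m (n + 1) ((n + (m + 1)) + 1) (by omega) (by omega)]
    rw [show (n + (m + 1)) + 1 = (m + 1) + (n + 1) from by omega, pow_add]
    ring
  have hQ : Q q m = ∑' n : ℕ,
      (Nat.card {π : (n + 1).Partition // (m : ℤ) ≤ rank π} : ℝ) * q ^ (n + 1) := rfl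
  rw [hQ, key, hsum1, hsum2]
  ring

end Dyson
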